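/- arXiv:1502.05888 — 11 statements merged into one kernel-verified Lean document; each statement's English description precedes it below -/
import Mathlib

section
/- The maxcard Condorcet rule admits an equivalent maximization formulation: MCC(P) equals the set of rational judgment sets J maximizing |J ∩ m(P)|. -/
open scoped NNReal

variable {Φ : Type*} [DecidableEq Φ]

/-- Number of voters in profile `P` accepting `φ`. -/
def Nacc {n : ℕ} (P : Fin n → Finset Φ) (φ : Φ) : ℕ :=
  (Finset.univ.filter fun i => φ ∈ P i).card

/-- The majoritarian judgment set `m(P)`: agenda elements accepted by a strict majority. -/
def maj (A : Finset Φ) {n : ℕ} (P : Fin n → Finset Φ) : Finset Φ :=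
  A.filter fun φ => n < 2 * Nacc P φ

/-- A rational judgment set: a complete and consistent subset of the agenda. -/
def Rational (A : Finset Φ) (neg : Φ → Φ) (Cons : Finset Φ → Prop) (J : Finset Φ) : Prop :=
  J ⊆ A ∧ (∀ φ ∈ A, φ ∈ J ∨ neg φ ∈ J) ∧ Cons J

/-- The set of rational extensions of `S`. -/
def extSet (A : Finset Φ) (neg : Φ → Φ) (Cons : Finset Φ → Prop) (S : Finset Φ) :
    Set (Finset Φ) :=
  {J | Rational A neg Cons J ∧ S ⊆ J}

/-- `MCC(P)` (rational extensions of maximum-cardinality consistent subsets of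
`m(P)`) equals the set of rational judgment sets maximizing `|J ∩ m(P)|`. -/
theorem mcc_eq_argmax
    (A : Finset Φ) (neg : Φ → Φ) (Cons : Finset Φ → Prop)
    (hmono : ∀ S T : Finset Φ, S ⊆ T → Cons T → Cons S)
    (hext : ∀ S : Finset Φ, S ⊆ A → Cons S → ∃ J, Rational A neg Cons J ∧ S ⊆ J)
    (hne : ∃ J, Rational A neg Cons J)
    {n : ℕ} (P : Fin n → Finset Φ) :
    {J | Rational A neg Cons J ∧ ∃ S ⊆ maj A P, Cons S ∧
        (∀ T ⊆ maj A P, Cons T → T.card ≤ S.card) ∧ S ⊆ J}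
      = {J | Rational A neg Cons J ∧
          ∀ J', Rational A neg Cons J' → (J' ∩ maj A P).card ≤ (J ∩ maj A P).card} := by
  have hmajA : maj A P ⊆ A := Finset.filter_subset _ _
  ext J
  simp only [Set.mem_setOf_eq]
  constructor
  · rintro ⟨hJ, S, hSmaj, hScons, hSmax, hSJ⟩
    refine ⟨hJ, fun J' hJ' => ?_⟩
    have h1 : (J' ∩ maj A P).card ≤ S.card :=
      hSmax _ (Finset.inter_subset_right) (hmono _ _ Finset.inter_subset_left hJ'.2.2)
    have h2 : S ⊆ J ∩ maj A P := Finset.subset_inter hSJ hSmaj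
    exact h1.trans (Finset.card_le_card h2)
  · rintro ⟨hJ, hmax⟩
    refine ⟨hJ, J ∩ maj A P, Finset.inter_subset_right,
      hmono _ _ Finset.inter_subset_left hJ.2.2, fun T hT hTcons => ?_,
      Finset.inter_subset_left⟩
    obtain ⟨J', hJ', hTJ'⟩ := hext T (hT.trans hmajA) hTcons
    have : T ⊆ J' ∩ maj A P := Finset.subset_inter hTJ' hT
    exact (Finset.card_le_card this).trans (hmax J' hJ')
end

section
/- The rules MC, MCC, MED, RA, Young, and MPC are majority-preserving: whenever m(P) is consistent, the rule outputs exactly the set of rational extensions of m(P). -/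
open scoped NNReal

variable {Φ : Type*} [DecidableEq Φ]

/-- The maximal-Condorcet rule: rational extensions of inclusion-maximal consistent
subsets of `m(P)`. -/
def MC (A : Finset Φ) (neg : Φ → Φ) (Cons : Finset Φ → Prop) {n : ℕ}
    (P : Fin n → Finset Φ) : Set (Finset Φ) :=
  {J | Rational A neg Cons J ∧ ∃ S ⊆ maj A P, Cons S ∧
      (∀ T, S ⊆ T → T ⊆ maj A P → Cons T → T = S) ∧ S ⊆ J}

/-- The maxcard-Condorcet rule: rational extensions of maximum-cardinality consistent
subsets of `m(P)`. -/
def MCC (A : Finset Φ) (neg : Φ → Φ) (Cons : Finset Φ → Prop) {n : ℕ}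
    (P : Fin n → Finset Φ) : Set (Finset Φ) :=
  {J | Rational A neg Cons J ∧ ∃ S ⊆ maj A P, Cons S ∧
      (∀ T ⊆ maj A P, Cons T → T.card ≤ S.card) ∧ S ⊆ J}

/-- The median rule: rational judgment sets maximizing `Σ_{φ∈J} N(P,φ)`. -/
def MED (A : Finset Φ) (neg : Φ → Φ) (Cons : Finset Φ → Prop) {n : ℕ}
    (P : Fin n → Finset Φ) : Set (Finset Φ) :=
  {J | Rational A neg Cons J ∧ ∀ J', Rational A neg Cons J' →
      ∑ φ ∈ J', Nacc P φ ≤ ∑ φ ∈ J, Nacc P φ}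

open Classical in
/-- Greedy procedure: add each element of the list in turn if it keeps the set consistent. -/
noncomputable def greedy (Cons : Finset Φ → Prop) : List Φ → Finset Φ → Finset Φ
  | [], S => S
  | φ :: l, S =>
      if Cons (insert φ S) then greedy Cons l (insert φ S) else greedy Cons l S

/-- The ranked-agenda rule: outcomes of the greedy procedure along some enumeration of the
agenda in non-increasing order of `N(P,·)`. -/
def RA (A : Finset Φ) (Cons : Finset Φ → Prop) {n : ℕ}
    (P : Fin n → Finset Φ) : Set (Finset Φ) :=
  {J | ∃ l : List Φ, l.Nodup ∧ (∀ φ, φ ∈ l ↔ φ ∈ A) ∧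
      l.Pairwise (fun a b => Nacc P b ≤ Nacc P a) ∧ J = greedy Cons l ∅}

/-- Number of voters in the subprofile indexed by `I` accepting `φ`. -/
def NaccI {n : ℕ} (P : Fin n → Finset Φ) (I : Finset (Fin n)) (φ : Φ) : ℕ :=
  (I.filter fun i => φ ∈ P i).card

/-- Majoritarian set of the subprofile of `P` indexed by `I`. -/
def majI (A : Finset Φ) {n : ℕ} (P : Fin n → Finset Φ) (I : Finset (Fin n)) : Finset Φ :=
  A.filter fun φ => I.card < 2 * NaccI P I φ

/-- The Young rule: rational extensions of `m(Q)` for maximum-cardinality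
majority-consistent subprofiles `Q` of `P`. -/
def Young (A : Finset Φ) (neg : Φ → Φ) (Cons : Finset Φ → Prop) {n : ℕ}
    (P : Fin n → Finset Φ) : Set (Finset Φ) :=
  {J | ∃ I : Finset (Fin n), Cons (majI A P I) ∧
      (∀ I' : Finset (Fin n), Cons (majI A P I') → I'.card ≤ I.card) ∧
      J ∈ extSet A neg Cons (majI A P I)}

/-- The minimal-profile-change rule: rational extensions of `m(Q)` for majority-consistent
rational profiles `Q` minimizing the summed Hamming distance to `P`. -/
def MPC (A : Finset Φ) (neg : Φ → Φ) (Cons : Finset Φ → Prop) {n : ℕ}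
    (P : Fin n → Finset Φ) : Set (Finset Φ) :=
  {J | ∃ Q : Fin n → Finset Φ, (∀ i, Rational A neg Cons (Q i)) ∧ Cons (maj A Q) ∧
      (∀ Q' : Fin n → Finset Φ, (∀ i, Rational A neg Cons (Q' i)) → Cons (maj A Q') →
        ∑ i, (P i \ Q i).card ≤ ∑ i, (P i \ Q' i).card) ∧
      J ∈ extSet A neg Cons (maj A Q)}

/-! ### Auxiliary lemmas -/

section Aux

variable {A : Finset Φ} {neg : Φ → Φ} {Cons : Finset Φ → Prop}

lemma aux_greedy_subset (Cons : Finset Φ → Prop) (l : List Φ) (S : Finset Φ) :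
    greedy Cons l S ⊆ l.toFinset ∪ S := by
  induction l generalizing S with
  | nil => simp [greedy]
  | cons φ t ih =>
    classical
    simp only [greedy]
    split
    · refine (ih (insert φ S)).trans ?_
      intro x hx; simp only [Finset.mem_union, List.mem_toFinset, Finset.mem_insert,
        List.toFinset_cons] at hx ⊢
      tauto
    · refine (ih S).trans ?_
      intro x hx; simp only [Finset.mem_union, List.mem_toFinset,
        List.toFinset_cons, Finset.mem_insert] at hx ⊢
      tauto

lemma aux_subset_greedy (Cons : Finset Φ → Prop) (l : List Φ) (S : Finset Φ) :
    S ⊆ greedy Cons l S := by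
  induction l generalizing S with
  | nil => simp [greedy]
  | cons φ t ih =>
    classical
    simp only [greedy]
    split
    · exact (Finset.subset_insert φ S).trans (ih (insert φ S))
    · exact ih S

lemma aux_greedy_cons (hmono : ∀ S T : Finset Φ, S ⊆ T → Cons T → Cons S)
    (l : List Φ) (S : Finset Φ) (hS : Cons S) : Cons (greedy Cons l S) := by
  induction l generalizing S with
  | nil => simpa [greedy] using hS
  | cons φ t ih =>
    classical
    simp only [greedy]
    split
    · exact ih _ (by assumption)
    · exact ih _ hS

lemma aux_greedy_max (hmono : ∀ S T : Finset Φ, S ⊆ T → Cons T → Cons S)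
    (l : List Φ) (S : Finset Φ) :
    ∀ φ ∈ l, φ ∉ greedy Cons l S → ¬ Cons (insert φ (greedy Cons l S)) := by
  induction l generalizing S with
  | nil => simp
  | cons ψ t ih =>
    classical
    intro φ hφ hφJ
    simp only [greedy] at hφJ ⊢
    by_cases h : Cons (insert ψ S)
    · rw [if_pos h] at hφJ ⊢
      rcases List.mem_cons.1 hφ with rfl | hφt
      · exact absurd (aux_subset_greedy Cons t (insert φ S) (Finset.mem_insert_self φ S)) hφJ
      · exact ih _ φ hφt hφJ
    · rw [if_neg h] at hφJ ⊢
      rcases List.mem_cons.1 hφ with rfl | hφt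
      · intro hc
        exact h (hmono _ _ (Finset.insert_subset_insert _
          (aux_subset_greedy Cons t S)) hc)
      · exact ih _ φ hφt hφJ

lemma aux_greedy_append (Cons : Finset Φ → Prop) (l₁ l₂ : List Φ) (S : Finset Φ) :
    greedy Cons (l₁ ++ l₂) S = greedy Cons l₂ (greedy Cons l₁ S) := by
  induction l₁ generalizing S with
  | nil => simp [greedy]
  | cons φ t ih =>
    classical
    simp only [List.cons_append, greedy]
    split <;> exact ih _

lemma aux_greedy_all_mem (hmono : ∀ S T : Finset Φ, S ⊆ T → Cons T → Cons S)
    {J : Finset Φ} (hJ : Cons J) :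
    ∀ (l : List Φ) (S : Finset Φ), (∀ φ ∈ l, φ ∈ J) → S ⊆ J →
      greedy Cons l S = S ∪ l.toFinset := by
  intro l
  induction l with
  | nil => intro S _ _; simp [greedy]
  | cons φ t ih =>
    classical
    intro S hl hS
    have hφJ : φ ∈ J := hl φ List.mem_cons_self
    have hins : insert φ S ⊆ J := Finset.insert_subset hφJ hS
    have hc : Cons (insert φ S) := hmono _ _ hins hJ
    simp only [greedy, if_pos hc]
    rw [ih (insert φ S) (fun ψ hψ => hl ψ (List.mem_cons_of_mem _ hψ)) hins]
    ext x
    simp only [Finset.mem_union, Finset.mem_insert, List.mem_toFinset, List.toFinset_cons]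
    tauto

lemma aux_greedy_blocked
    (hnotboth : ∀ S : Finset Φ, Cons S → ∀ φ ∈ A, φ ∈ S → neg φ ∉ S) :
    ∀ (l : List Φ) (S : Finset Φ), (∀ φ ∈ l, φ ∈ A ∧ neg φ ∈ S) →
      greedy Cons l S = S := by
  intro l
  induction l with
  | nil => intro S _; simp [greedy]
  | cons φ t ih =>
    classical
    intro S hl
    obtain ⟨hφA, hnegS⟩ := hl φ List.mem_cons_self
    have hnc : ¬ Cons (insert φ S) := by
      intro hc
      exact hnotboth _ hc φ hφA (Finset.mem_insert_self _ _)
        (Finset.mem_insert_of_mem hnegS)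
    simp only [greedy, if_neg hnc]
    exact ih S (fun ψ hψ => hl ψ (List.mem_cons_of_mem _ hψ))

lemma aux_greedy_maj (hmono : ∀ S T : Finset Φ, S ⊆ T → Cons T → Cons S)
    {n : ℕ} {P : Fin n → Finset Φ} (hcons : Cons (maj A P)) :
    ∀ (l : List Φ) (S : Finset Φ),
      l.Pairwise (fun a b => Nacc P b ≤ Nacc P a) → (∀ φ ∈ l, φ ∈ A) → S ⊆ maj A P →
      ∀ ψ ∈ l, ψ ∈ maj A P → ψ ∈ greedy Cons l S := by
  intro l
  induction l with
  | nil => intro S _ _ _ ψ hψ; exact absurd hψ List.not_mem_nil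
  | cons φ t ih =>
    classical
    intro S hsort hl hS ψ hψ hψm
    have hrel : ∀ b ∈ t, Nacc P b ≤ Nacc P φ := (List.pairwise_cons.1 hsort).1
    have hst : t.Pairwise (fun a b => Nacc P b ≤ Nacc P a) := (List.pairwise_cons.1 hsort).2
    by_cases hm : n < 2 * Nacc P φ
    · have hφmaj : φ ∈ maj A P :=
        Finset.mem_filter.2 ⟨hl φ List.mem_cons_self, hm⟩
      have hins : insert φ S ⊆ maj A P := Finset.insert_subset hφmaj hS
      have hc : Cons (insert φ S) := hmono _ _ hins hcons
      simp only [greedy, if_pos hc]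
      rcases List.mem_cons.1 hψ with rfl | hψt
      · exact aux_subset_greedy Cons t (insert ψ S) (Finset.mem_insert_self ψ S)
      · exact ih (insert φ S) hst (fun x hx => hl x (List.mem_cons_of_mem _ hx)) hins
          ψ hψt hψm
    · exfalso
      rcases List.mem_cons.1 hψ with rfl | hψt
      · exact hm (Finset.mem_filter.1 hψm).2
      · have h1 : Nacc P ψ ≤ Nacc P φ := hrel ψ hψt
        have h2 : n < 2 * Nacc P ψ := (Finset.mem_filter.1 hψm).2
        omega

end Aux

/-- the rules MC, MCC, MED, RA, Young and MPC are majority-preserving: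
whenever `m(P)` is consistent, each rule outputs exactly the rational extensions of `m(P)`. -/
theorem six_rules_majority_preserving
    (A : Finset Φ) (neg : Φ → Φ) (Cons : Finset Φ → Prop)
    (hA_neg : ∀ φ ∈ A, neg φ ∈ A)
    (hneg_ne : ∀ φ ∈ A, neg φ ≠ φ)
    (hneg_neg : ∀ φ ∈ A, neg (neg φ) = φ)
    (hnotboth : ∀ S : Finset Φ, Cons S → ∀ φ ∈ A, φ ∈ S → neg φ ∉ S)
    (hmono : ∀ S T : Finset Φ, S ⊆ T → Cons T → Cons S)
    (hext : ∀ S : Finset Φ, S ⊆ A → Cons S → ∃ J, Rational A neg Cons J ∧ S ⊆ J)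
    {n : ℕ} (P : Fin n → Finset Φ) (hP : ∀ i, Rational A neg Cons (P i))
    (hcons : Cons (maj A P)) :
    MC A neg Cons P = extSet A neg Cons (maj A P) ∧
    MCC A neg Cons P = extSet A neg Cons (maj A P) ∧
    MED A neg Cons P = extSet A neg Cons (maj A P) ∧
    RA A Cons P = extSet A neg Cons (maj A P) ∧
    Young A neg Cons P = extSet A neg Cons (maj A P) ∧
    MPC A neg Cons P = extSet A neg Cons (maj A P) := by
  classical
  have hmajA : maj A P ⊆ A := Finset.filter_subset _ _
  -- each voter accepts exactly one member of each pair
  have hpair : ∀ φ ∈ A, Nacc P φ + Nacc P (neg φ) = n := by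
    intro φ hφ
    have h1 : ∀ i : Fin n, neg φ ∈ P i ↔ φ ∉ P i := by
      intro i
      obtain ⟨hPA, hPcomp, hPcons⟩ := hP i
      constructor
      · intro h hφi
        exact hnotboth (P i) hPcons φ hφ hφi h
      · intro h
        rcases hPcomp φ hφ with h' | h'
        · exact absurd h' h
        · exact h'
    have h2 : Nacc P (neg φ) =
        (Finset.univ.filter fun i : Fin n => ¬ φ ∈ P i).card := by
      unfold Nacc
      congr 1
      exact Finset.filter_congr fun i _ => by simpa using h1 i
    rw [h2]
    unfold Nacc
    have h3 := Finset.card_filter_add_card_filter_not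
      (s := (Finset.univ : Finset (Fin n))) (p := fun i => φ ∈ P i)
    rw [Finset.card_univ, Fintype.card_fin] at h3
    convert h3 using 3
  -- members of a rational extension of `maj A P` have weak majority support
  have hfact1 : ∀ J, Rational A neg Cons J → maj A P ⊆ J →
      ∀ φ ∈ J, n ≤ 2 * Nacc P φ := by
    intro J hJ hmJ φ hφ
    by_contra h
    have hφA : φ ∈ A := hJ.1 hφ
    have hp := hpair φ hφA
    have : n < 2 * Nacc P (neg φ) := by omega
    have : neg φ ∈ maj A P := Finset.mem_filter.2 ⟨hA_neg φ hφA, this⟩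
    exact hnotboth J hJ.2.2 φ hφA hφ (hmJ this)
  have hfact2 : ∀ J, Rational A neg Cons J → maj A P ⊆ J →
      ∀ φ ∈ A, φ ∉ J → 2 * Nacc P φ ≤ n := by
    intro J hJ hmJ φ hφA hφ
    have hnegJ : neg φ ∈ J := (hJ.2.1 φ hφA).resolve_left hφ
    have := hfact1 J hJ hmJ (neg φ) hnegJ
    have hp := hpair φ hφA
    omega
  -- the sum over a symmetric difference, via the bijection `neg`
  have hsumdiff : ∀ J J', Rational A neg Cons J → Rational A neg Cons J' →
      ∑ φ ∈ J' \ J, Nacc P φ = ∑ φ ∈ J \ J', Nacc P (neg φ) := by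
    intro J J' hJ hJ'
    have hmap : ∀ K K', Rational A neg Cons K → Rational A neg Cons K' →
        ∀ φ ∈ K \ K', neg φ ∈ K' \ K := by
      intro K K' hK hK' φ hφ
      have hφK : φ ∈ K := (Finset.mem_sdiff.1 hφ).1
      have hφK' : φ ∉ K' := (Finset.mem_sdiff.1 hφ).2
      have hφA : φ ∈ A := hK.1 hφK
      refine Finset.mem_sdiff.2 ⟨(hK'.2.1 φ hφA).resolve_left hφK', ?_⟩
      exact hnotboth K hK.2.2 φ hφA hφK
    refine Finset.sum_bij' (fun φ _ => neg φ) (fun φ _ => neg φ)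
      (fun φ hφ => hmap J' J hJ' hJ φ hφ)
      (fun φ hφ => hmap J J' hJ hJ' φ hφ) ?_ ?_
      (fun φ hφ => (congrArg (Nacc P) (hneg_neg φ (hJ'.1 (Finset.mem_sdiff.1 hφ).1))).symm)
    · intro φ hφ
      exact hneg_neg φ (hJ'.1 (Finset.mem_sdiff.1 hφ).1)
    · intro φ hφ
      exact hneg_neg φ (hJ.1 (Finset.mem_sdiff.1 hφ).1)
  -- every rational extension of `maj A P` maximizes the median score
  have hmedmax : ∀ J J', Rational A neg Cons J → maj A P ⊆ J →
      Rational A neg Cons J' → ∑ φ ∈ J', Nacc P φ ≤ ∑ φ ∈ J, Nacc P φ := by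
    intro J J' hJ hmJ hJ'
    rw [← Finset.sum_inter_add_sum_sdiff J' J (Nacc P),
      ← Finset.sum_inter_add_sum_sdiff J J' (Nacc P), Finset.inter_comm]
    refine Nat.add_le_add_left ?_ _
    rw [hsumdiff J J' hJ hJ']
    refine Finset.sum_le_sum ?_
    intro φ hφ
    have hφJ : φ ∈ J := (Finset.mem_sdiff.1 hφ).1
    have hφA : φ ∈ A := hJ.1 hφJ
    have h1 := hfact1 J hJ hmJ φ hφJ
    have hp := hpair φ hφA
    omega
  -- every median maximizer extends `maj A P`
  have hmedrev : ∀ J, Rational A neg Cons J →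
      (∀ J', Rational A neg Cons J' → ∑ φ ∈ J', Nacc P φ ≤ ∑ φ ∈ J, Nacc P φ) →
      maj A P ⊆ J := by
    intro J hJ hmax
    obtain ⟨J0, hJ0, hmJ0⟩ := hext (maj A P) hmajA hcons
    intro φ0 hφ0
    by_contra hφ0J
    have hlt : ∑ φ ∈ J, Nacc P φ < ∑ φ ∈ J0, Nacc P φ := by
      rw [← Finset.sum_inter_add_sum_sdiff J J0 (Nacc P),
        ← Finset.sum_inter_add_sum_sdiff J0 J (Nacc P), Finset.inter_comm]
      refine Nat.add_lt_add_left ?_ _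
      rw [hsumdiff J0 J hJ0 hJ]
      refine Finset.sum_lt_sum ?_ ⟨φ0, ?_, ?_⟩
      · intro ψ hψ
        have hψJ0 : ψ ∈ J0 := (Finset.mem_sdiff.1 hψ).1
        have hψA : ψ ∈ A := hJ0.1 hψJ0
        have h1 := hfact1 J0 hJ0 hmJ0 ψ hψJ0
        have hp := hpair ψ hψA
        omega
      · exact Finset.mem_sdiff.2 ⟨hmJ0 hφ0, hφ0J⟩
      · have hφ0A : φ0 ∈ A := hmajA hφ0
        have h1 : n < 2 * Nacc P φ0 := (Finset.mem_filter.1 hφ0).2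
        have hp := hpair φ0 hφ0A
        omega
    exact absurd (hmax J0 hJ0) (not_le.2 hlt)
  refine ⟨?_, ?_, ?_, ?_, ?_, ?_⟩
  -- MC
  · ext J
    constructor
    · rintro ⟨hJ, S, hSsub, _, hSmax, hSJ⟩
      have : maj A P = S := hSmax (maj A P) hSsub (subset_refl _) hcons
      exact ⟨hJ, this ▸ hSJ⟩
    · rintro ⟨hJ, hmJ⟩
      exact ⟨hJ, maj A P, subset_refl _, hcons,
        fun T hST hTs _ => subset_antisymm hTs hST, hmJ⟩
  -- MCC
  · ext J
    constructor
    · rintro ⟨hJ, S, hSsub, _, hSmax, hSJ⟩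
      have : S = maj A P :=
        Finset.eq_of_subset_of_card_le hSsub (hSmax (maj A P) (subset_refl _) hcons)
      exact ⟨hJ, this ▸ hSJ⟩
    · rintro ⟨hJ, hmJ⟩
      exact ⟨hJ, maj A P, subset_refl _, hcons,
        fun T hT _ => Finset.card_le_card hT, hmJ⟩
  -- MED
  · ext J
    constructor
    · rintro ⟨hJ, hmax⟩
      exact ⟨hJ, hmedrev J hJ hmax⟩
    · rintro ⟨hJ, hmJ⟩
      exact ⟨hJ, fun J' hJ' => hmedmax J J' hJ hmJ hJ'⟩
  -- RA
  · ext J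
    constructor
    · rintro ⟨l, hnd, henum, hsort, rfl⟩
      set G := greedy Cons l ∅ with hG
      have hGA : G ⊆ A := by
        intro x hx
        have := aux_greedy_subset Cons l ∅ hx
        rw [Finset.union_empty, List.mem_toFinset] at this
        exact (henum x).1 this
      have hGc : Cons G :=
        aux_greedy_cons hmono l ∅ (hmono ∅ (maj A P) (Finset.empty_subset _) hcons)
      obtain ⟨K, hK, hGK⟩ := hext G hGA hGc
      have hcompl : ∀ φ ∈ A, φ ∈ G ∨ neg φ ∈ G := by
        intro φ hφA
        by_contra h
        push_neg at h
        obtain ⟨h1, h2⟩ := h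
        rcases hK.2.1 φ hφA with hφK | hφK
        · have := aux_greedy_max hmono l ∅ φ ((henum φ).2 hφA) h1
          exact this (hmono _ _ (Finset.insert_subset hφK hGK) hK.2.2)
        · have := aux_greedy_max hmono l ∅ (neg φ) ((henum (neg φ)).2 (hA_neg φ hφA)) h2
          exact this (hmono _ _ (Finset.insert_subset hφK hGK) hK.2.2)
      have hmG : maj A P ⊆ G := by
        intro ψ hψ
        exact aux_greedy_maj hmono hcons l ∅ hsort (fun x hx => (henum x).1 hx)
          (Finset.empty_subset _) ψ ((henum ψ).2 (hmajA hψ)) hψ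
      exact ⟨⟨hGA, hcompl, hGc⟩, hmG⟩
    · rintro ⟨hJ, hmJ⟩
      obtain ⟨hJA, hJcomp, hJcons⟩ := hJ
      set r' : Φ → Φ → Prop := fun a b => Nacc P b ≤ Nacc P a with hr'
      letI : DecidableRel r' := fun a b => Nat.decLe _ _
      haveI : IsTotal Φ r' := ⟨fun a b => le_total (Nacc P b) (Nacc P a)⟩
      haveI : IsTrans Φ r' := ⟨fun a b c h1 h2 => le_trans h2 h1⟩
      set l₁ := J.toList.insertionSort r' with hl₁
      set l₂ := (A \ J).toList.insertionSort r' with hl₂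
      have hm₁ : ∀ x, x ∈ l₁ ↔ x ∈ J := by
        intro x
        rw [hl₁, List.mem_insertionSort, Finset.mem_toList]
      have hm₂ : ∀ x, x ∈ l₂ ↔ x ∈ A \ J := by
        intro x
        rw [hl₂, List.mem_insertionSort, Finset.mem_toList]
      refine ⟨l₁ ++ l₂, ?_, ?_, ?_, ?_⟩
      · refine List.Nodup.append ?_ ?_ ?_
        · exact (List.perm_insertionSort r' J.toList).nodup_iff.2 J.nodup_toList
        · exact (List.perm_insertionSort r' (A \ J).toList).nodup_iff.2 (A \ J).nodup_toList
        · intro a ha hb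
          exact ((Finset.mem_sdiff.1 ((hm₂ a).1 hb)).2) ((hm₁ a).1 ha)
      · intro φ
        constructor
        · intro hφ
          rcases List.mem_append.1 hφ with h | h
          · exact hJA ((hm₁ φ).1 h)
          · exact (Finset.mem_sdiff.1 ((hm₂ φ).1 h)).1
        · intro hφ
          by_cases hφJ : φ ∈ J
          · exact List.mem_append.2 (Or.inl ((hm₁ φ).2 hφJ))
          · exact List.mem_append.2 (Or.inr ((hm₂ φ).2 (Finset.mem_sdiff.2 ⟨hφ, hφJ⟩)))
      · rw [List.pairwise_append]
        refine ⟨List.pairwise_insertionSort r' _, List.pairwise_insertionSort r' _, ?_⟩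
        intro a ha b hb
        have haJ : a ∈ J := (hm₁ a).1 ha
        have hbA : b ∈ A := (Finset.mem_sdiff.1 ((hm₂ b).1 hb)).1
        have hbJ : b ∉ J := (Finset.mem_sdiff.1 ((hm₂ b).1 hb)).2
        have h1 := hfact1 J ⟨hJA, hJcomp, hJcons⟩ hmJ a haJ
        have h2 := hfact2 J ⟨hJA, hJcomp, hJcons⟩ hmJ b hbA hbJ
        show Nacc P b ≤ Nacc P a
        omega
      · rw [aux_greedy_append]
        have e1 : greedy Cons l₁ ∅ = J := by
          rw [aux_greedy_all_mem hmono hJcons l₁ ∅ (fun φ hφ => (hm₁ φ).1 hφ)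
            (Finset.empty_subset _)]
          ext x
          simp only [Finset.mem_union, Finset.notMem_empty, false_or, List.mem_toFinset]
          exact hm₁ x
        rw [e1]
        refine (aux_greedy_blocked hnotboth l₂ J ?_).symm
        intro φ hφ
        have hφA : φ ∈ A := (Finset.mem_sdiff.1 ((hm₂ φ).1 hφ)).1
        have hφJ : φ ∉ J := (Finset.mem_sdiff.1 ((hm₂ φ).1 hφ)).2
        exact ⟨hφA, (hJcomp φ hφA).resolve_left hφJ⟩
  -- Young
  · have hmajI_univ : majI A P Finset.univ = maj A P := by
      ext φ
      unfold majI maj NaccI Nacc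
      rw [Finset.mem_filter, Finset.mem_filter, Finset.card_univ, Fintype.card_fin]
    ext J
    constructor
    · rintro ⟨I, hIc, hImax, hJ⟩
      have hIuniv : I = Finset.univ := by
        refine Finset.eq_univ_of_card I ?_
        have h1 : Fintype.card (Fin n) ≤ I.card := by
          simpa [Finset.card_univ] using hImax Finset.univ (by rw [hmajI_univ]; exact hcons)
        have h2 : I.card ≤ Fintype.card (Fin n) := by
          simpa [Finset.card_univ] using Finset.card_le_univ I
        exact le_antisymm h2 h1
      rw [hIuniv, hmajI_univ] at hJ
      exact hJ
    · intro hJ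
      exact ⟨Finset.univ, by rw [hmajI_univ]; exact hcons,
        fun I' _ => Finset.card_le_univ I', by rw [hmajI_univ]; exact hJ⟩
  -- MPC
  · ext J
    constructor
    · rintro ⟨Q, hQrat, hQcons, hQmin, hJ⟩
      have h0 : ∑ i, (P i \ P i).card = 0 := by simp
      have hmin := hQmin P hP hcons
      rw [h0, Nat.le_zero] at hmin
      have hPQ : ∀ i, P i ⊆ Q i := by
        intro i
        have : (P i \ Q i).card = 0 := by
          by_contra h
          have h1 : 0 < (P i \ Q i).card := Nat.pos_of_ne_zero h
          have h2 : (P i \ Q i).card ≤ ∑ j, (P j \ Q j).card :=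
            Finset.single_le_sum (f := fun j => (P j \ Q j).card)
              (fun j _ => Nat.zero_le _) (Finset.mem_univ i)
          omega
        rw [Finset.card_eq_zero, Finset.sdiff_eq_empty_iff_subset] at this
        exact this
      have hQP : Q = P := by
        funext i
        refine subset_antisymm ?_ (hPQ i)
        intro φ hφ
        by_contra hφP
        have hφA : φ ∈ A := (hQrat i).1 hφ
        have hnegP : neg φ ∈ P i := ((hP i).2.1 φ hφA).resolve_left hφP
        exact hnotboth (Q i) (hQrat i).2.2 φ hφA hφ (hPQ i hnegP)
      rw [hQP] at hJ
      exact hJ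
    · intro hJ
      exact ⟨P, hP, hcons, fun Q' _ _ => by simp, hJ⟩
end

section
/- For every pseudo-distance d on the set of rational judgment sets, the max-distance rule F^{d,max} is not majority-preserving: there exists a majority-consistent profile P such that F^{d,max}(P) strictly contains ext(m(P)). -/
open scoped NNReal

variable {Φ : Type*} [DecidableEq Φ]

/-- The max-distance rule `F^{d,max}`: rational judgment sets minimizing the maximal
distance to the individual judgment sets of the profile. -/
def Fmax (A : Finset Φ) (neg : Φ → Φ) (Cons : Finset Φ → Prop)
    (d : Finset Φ → Finset Φ → ℝ≥0) {n : ℕ} (P : Fin n → Finset Φ) : Set (Finset Φ) :=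
  {J | Rational A neg Cons J ∧ ∀ J', Rational A neg Cons J' →
      (Finset.univ.sup fun i => d J (P i)) ≤ Finset.univ.sup fun i => d J' (P i)}

/-- for every pseudo-distance `d` on rational judgment sets, `F^{d,max}` is
not majority-preserving: there is a majority-consistent profile `P` such that
`F^{d,max}(P)` strictly contains `ext(m(P))`. -/
theorem fmax_not_majority_preserving
    (A : Finset Φ) (neg : Φ → Φ) (Cons : Finset Φ → Prop)
    (hA_neg : ∀ φ ∈ A, neg φ ∈ A)
    (hneg_ne : ∀ φ ∈ A, neg φ ≠ φ)
    (hneg_neg : ∀ φ ∈ A, neg (neg φ) = φ)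
    (hnotboth : ∀ S : Finset Φ, Cons S → ∀ φ ∈ A, φ ∈ S → neg φ ∉ S)
    (hmono : ∀ S T : Finset Φ, S ⊆ T → Cons T → Cons S)
    (d : Finset Φ → Finset Φ → ℝ≥0)
    (hsymm : ∀ J J', Rational A neg Cons J → Rational A neg Cons J' → d J J' = d J' J)
    (hzero : ∀ J J', Rational A neg Cons J → Rational A neg Cons J' → (d J J' = 0 ↔ J = J'))
    (htwo : ∃ J₁ J₂, Rational A neg Cons J₁ ∧ Rational A neg Cons J₂ ∧ J₁ ≠ J₂) :
    ∃ (n : ℕ) (P : Fin n → Finset Φ), (∀ i, Rational A neg Cons (P i)) ∧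
      Cons (maj A P) ∧ extSet A neg Cons (maj A P) ⊂ Fmax A neg Cons d P := by

  classical
  obtain ⟨J₁, J₂, hJ₁, hJ₂, hne⟩ := htwo
  set S : Finset (Finset Φ × Finset Φ) :=
    (A.powerset ×ˢ A.powerset).filter
      (fun p => Rational A neg Cons p.1 ∧ Rational A neg Cons p.2 ∧ p.1 ≠ p.2) with hS
  have hmemS : ∀ X Y, Rational A neg Cons X → Rational A neg Cons Y → X ≠ Y → (X, Y) ∈ S := by
    intro X Y hX hY hXY
    simp only [hS, Finset.mem_filter, Finset.mem_product, Finset.mem_powerset]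
    exact ⟨⟨hX.1, hY.1⟩, hX, hY, hXY⟩
  obtain ⟨p, hpS, hpmin⟩ :=
    S.exists_min_image (fun p => d p.1 p.2) ⟨(J₁, J₂), hmemS _ _ hJ₁ hJ₂ hne⟩
  have hp' : Rational A neg Cons p.1 ∧ Rational A neg Cons p.2 ∧ p.1 ≠ p.2 :=
    (Finset.mem_filter.mp hpS).2
  obtain ⟨hK₁, hK₂, hKne⟩ := hp'
  set K₁ := p.1 with hK1def
  set K₂ := p.2 with hK2def
  have hdmin : ∀ X Y, Rational A neg Cons X → Rational A neg Cons Y → X ≠ Y →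
      d K₁ K₂ ≤ d X Y := fun X Y hX hY hXY => hpmin _ (hmemS X Y hX hY hXY)
  have hext : ∀ J, Rational A neg Cons J → K₁ ⊆ J → J = K₁ := by
    intro J hJ hsub
    apply Finset.Subset.antisymm _ hsub
    intro φ hφ
    have hφA : φ ∈ A := hJ.1 hφ
    rcases hK₁.2.1 φ hφA with h | h
    · exact h
    · have := hnotboth J hJ.2.2 (neg φ) (hA_neg φ hφA) (hsub h)
      rw [hneg_neg φ hφA] at this
      exact absurd hφ this
  refine ⟨3, ![K₁, K₁, K₂], ?_, ?_, ?_⟩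
  · intro i
    fin_cases i <;> simpa using (by first | exact hK₁ | exact hK₂)
  all_goals {
    have hNacc : ∀ φ : Φ, Nacc ![K₁, K₁, K₂] φ =
        (if φ ∈ K₁ then 1 else 0) + ((if φ ∈ K₁ then 1 else 0) + (if φ ∈ K₂ then 1 else 0)) := by
      intro φ
      rw [Nacc, Finset.card_filter, Fin.sum_univ_three]
      simp only [Matrix.cons_val_zero, Matrix.cons_val_one, Matrix.head_cons,
        Matrix.cons_val_two, Matrix.tail_cons]
      by_cases h1 : φ ∈ K₁ <;> by_cases h2 : φ ∈ K₂ <;> simp [h1, h2]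
    have hmaj : maj A ![K₁, K₁, K₂] = K₁ := by
      ext φ
      simp only [maj, Finset.mem_filter]
      constructor
      · rintro ⟨hφA, hlt⟩
        rw [hNacc] at hlt
        by_contra h
        simp only [h, if_false] at hlt
        split_ifs at hlt <;> omega
      · intro h
        refine ⟨hK₁.1 h, ?_⟩
        rw [hNacc]
        simp only [h, if_true]
        split_ifs <;> omega
    have hsupK : ∀ J, Rational A neg Cons J →
        d K₁ K₂ ≤ Finset.univ.sup fun i => d J (![K₁, K₁, K₂] i) := by
      intro J hJ
      by_cases h : J = K₁
      · rw [h]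
        have := Finset.le_sup (f := fun i => d K₁ (![K₁, K₁, K₂] i)) (Finset.mem_univ (2 : Fin 3))
        simpa using this
      · calc d K₁ K₂ ≤ d J K₁ := hdmin J K₁ hJ hK₁ h
          _ ≤ _ := by
            have := Finset.le_sup (f := fun i => d J (![K₁, K₁, K₂] i)) (Finset.mem_univ (0 : Fin 3))
            simpa using this
    have hsup1 : (Finset.univ.sup fun i => d K₁ (![K₁, K₁, K₂] i)) ≤ d K₁ K₂ := by
      apply Finset.sup_le
      intro i _
      fin_cases i <;> simp [(hzero K₁ K₁ hK₁ hK₁).mpr rfl]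
    have hsup2 : (Finset.univ.sup fun i => d K₂ (![K₁, K₁, K₂] i)) ≤ d K₁ K₂ := by
      apply Finset.sup_le
      intro i _
      fin_cases i <;> simp [(hzero K₂ K₂ hK₂ hK₂).mpr rfl, hsymm K₂ K₁ hK₂ hK₁]
    have hF1 : K₁ ∈ Fmax A neg Cons d ![K₁, K₁, K₂] :=
      ⟨hK₁, fun J' hJ' => le_trans hsup1 (hsupK J' hJ')⟩
    have hF2 : K₂ ∈ Fmax A neg Cons d ![K₁, K₁, K₂] :=
      ⟨hK₂, fun J' hJ' => le_trans hsup2 (hsupK J' hJ')⟩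
    first
    | (rw [hmaj]; exact hK₁.2.2)
    | · rw [hmaj]
        constructor
        · intro J hJ
          have : J = K₁ := hext J hJ.1 hJ.2
          exact this ▸ hF1
        · intro hcon
          have : K₂ ∈ extSet A neg Cons K₁ := hcon hF2
          exact hKne.symm (hext K₂ this.1 this.2)
  }
end

section
/- If a pseudo-distance d is non-degenerate (there exist J, J', J'' with d(J,J'') > max(d(J,J'), d(J',J''))), then F^{d,max} is not even weakly majority-preserving: there is a majority-consistent profile P with ext(m(P)) not contained in F^{d,max}(P). -/
open scoped NNReal

variable {Φ : Type*} [DecidableEq Φ]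

/-- if the pseudo-distance `d` is non-degenerate, then `F^{d,max}` is not even
weakly majority-preserving: there is a majority-consistent profile `P` with
`ext(m(P)) ⊄ F^{d,max}(P)`. -/
theorem fmax_not_weakly_majority_preserving
    (A : Finset Φ) (neg : Φ → Φ) (Cons : Finset Φ → Prop)
    (hA_neg : ∀ φ ∈ A, neg φ ∈ A)
    (hneg_ne : ∀ φ ∈ A, neg φ ≠ φ)
    (hneg_neg : ∀ φ ∈ A, neg (neg φ) = φ)
    (hnotboth : ∀ S : Finset Φ, Cons S → ∀ φ ∈ A, φ ∈ S → neg φ ∉ S)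
    (hmono : ∀ S T : Finset Φ, S ⊆ T → Cons T → Cons S)
    (d : Finset Φ → Finset Φ → ℝ≥0)
    (hsymm : ∀ J J', Rational A neg Cons J → Rational A neg Cons J' → d J J' = d J' J)
    (hzero : ∀ J J', Rational A neg Cons J → Rational A neg Cons J' → (d J J' = 0 ↔ J = J'))
    (hnondeg : ∃ J J' J'', Rational A neg Cons J ∧ Rational A neg Cons J' ∧
      Rational A neg Cons J'' ∧ max (d J J') (d J' J'') < d J J'') :
    ∃ (n : ℕ) (P : Fin n → Finset Φ), (∀ i, Rational A neg Cons (P i)) ∧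
      Cons (maj A P) ∧ ¬ extSet A neg Cons (maj A P) ⊆ Fmax A neg Cons d P := by

  obtain ⟨J₁, J₂, J₃, h1, h2, h3, hlt⟩ := hnondeg
  refine ⟨5, ![J₁, J₂, J₃, J₃, J₃], ?_, ?_, ?_⟩
  · intro i; fin_cases i <;> simpa
  all_goals
    have hmaj : maj A ![J₁, J₂, J₃, J₃, J₃] = J₃ := by
      ext φ
      simp only [maj, Finset.mem_filter, Nacc, Finset.card_filter, Fin.sum_univ_five]
      simp only [Matrix.cons_val_zero, Matrix.cons_val_one, Matrix.head_cons,
        Matrix.cons_val_two, Matrix.tail_cons, Matrix.cons_val_three, Matrix.cons_val_four]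
      constructor
      · rintro ⟨hφA, hcnt⟩
        by_contra hφ3
        simp only [hφ3, if_false] at hcnt
        by_cases ha : φ ∈ J₁ <;> by_cases hb : φ ∈ J₂ <;> simp [ha, hb] at hcnt <;> omega
      · intro hφ3
        refine ⟨h3.1 hφ3, ?_⟩
        simp only [hφ3, if_true]
        split_ifs <;> omega
  · rw [hmaj]; exact h3.2.2
  · rw [hmaj]
    intro hsub
    have hmem : J₃ ∈ extSet A neg Cons J₃ := ⟨h3, subset_rfl⟩
    obtain ⟨-, hopt⟩ := hsub hmem
    have hopt2 := hopt J₂ h2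
    have hsup3 : d J₁ J₃ ≤ Finset.univ.sup fun i => d J₃ (![J₁, J₂, J₃, J₃, J₃] i) := by
      rw [hsymm J₁ J₃ h1 h3]
      exact Finset.le_sup (f := fun i => d J₃ (![J₁, J₂, J₃, J₃, J₃] i))
        (Finset.mem_univ (0 : Fin 5))
    have hsup2 : (Finset.univ.sup fun i => d J₂ (![J₁, J₂, J₃, J₃, J₃] i)) ≤
        max (d J₁ J₂) (d J₂ J₃) := by
      apply Finset.sup_le
      intro i _
      fin_cases i
      · show d J₂ J₁ ≤ _
        rw [hsymm J₂ J₁ h2 h1]; exact le_max_left _ _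
      · show d J₂ J₂ ≤ _
        rw [(hzero J₂ J₂ h2 h2).mpr rfl]; exact zero_le
      all_goals exact le_max_right _ _
    have : d J₁ J₃ ≤ max (d J₁ J₂) (d J₂ J₃) := le_trans hsup3 (le_trans hopt2 hsup2)
    exact absurd this (not_le.mpr hlt)
end

section
/- The MC rule satisfies weak unanimity: if every judgment set in profile P contains φ, then some judgment set in MC(P) contains φ. -/
open scoped NNReal

variable {Φ : Type*} [DecidableEq Φ]

/-- MC satisfies weak unanimity: if every voter accepts `φ`,
then some judgment set in `MC(P)` contains `φ`. -/
theorem mc_weak_unanimity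
    (A : Finset Φ) (neg : Φ → Φ) (Cons : Finset Φ → Prop)
    (hmono : ∀ S T : Finset Φ, S ⊆ T → Cons T → Cons S)
    (hext : ∀ S : Finset Φ, S ⊆ A → Cons S → ∃ J, Rational A neg Cons J ∧ S ⊆ J)
    {n : ℕ} (hn : 0 < n) (P : Fin n → Finset Φ) (hP : ∀ i, Rational A neg Cons (P i))
    (φ : Φ) (hφ : φ ∈ A) (huna : ∀ i, φ ∈ P i) :
    ∃ J ∈ MC A neg Cons P, φ ∈ J := by

  have hφmaj : φ ∈ maj A P := by
    rw [maj, Finset.mem_filter]; simp only [Nacc]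
    refine ⟨hφ, ?_⟩
    have : (Finset.univ.filter fun i => φ ∈ P i) = (Finset.univ : Finset (Fin n)) := by
      apply Finset.filter_true_of_mem; intro i _; exact huna i
    rw [this, Finset.card_univ, Fintype.card_fin]; omega
  -- {φ} is consistent
  have hconsφ : Cons {φ} := by
    have i0 : Fin n := ⟨0, hn⟩
    exact hmono {φ} (P i0) (by simp [huna i0]) (hP i0).2.2
  -- find a maximal consistent subset of maj containing φ
  have hfin : Set.Finite {S : Finset Φ | S ⊆ maj A P ∧ Cons S ∧ φ ∈ S} := by
    apply Set.Finite.subset (Finset.finite_toSet (maj A P).powerset)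
    intro S hS; simp only [Finset.coe_powerset, Set.mem_preimage, Set.mem_powerset_iff]
    exact_mod_cast hS.1
  obtain ⟨S, hSmem, hSmax⟩ := Set.Finite.exists_maximalFor id _ hfin
    ⟨{φ}, by simp [hφmaj], hconsφ, by simp⟩
  obtain ⟨hSsub, hScons, hφS⟩ := hSmem
  obtain ⟨J, hJrat, hSJ⟩ := hext S (hSsub.trans (Finset.filter_subset _ _)) hScons
  refine ⟨J, ⟨hJrat, S, hSsub, hScons, ?_, hSJ⟩, hSJ hφS⟩
  intro T hST hTsub hTcons
  exact Finset.Subset.antisymm (hSmax ⟨hTsub, hTcons, hST hφS⟩ hST) hST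
end

section
/- The Young rule satisfies strong unanimity: if every judgment set in profile P contains φ, then every judgment set in Y(P) contains φ. -/
open scoped NNReal

variable {Φ : Type*} [DecidableEq Φ]

/-- the Young rule satisfies strong unanimity: if every voter accepts `φ`,
then every judgment set in `Y(P)` contains `φ`. -/
theorem young_strong_unanimity
    (A : Finset Φ) (neg : Φ → Φ) (Cons : Finset Φ → Prop)
    {n : ℕ} (hn : 0 < n) (P : Fin n → Finset Φ) (hP : ∀ i, Rational A neg Cons (P i))
    (φ : Φ) (hφ : φ ∈ A) (huna : ∀ i, φ ∈ P i) :
    ∀ J ∈ Young A neg Cons P, φ ∈ J := by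
  rintro J ⟨I, hcons, hmax, ⟨_, hSJ⟩⟩
  -- singleton subprofile is consistent
  obtain ⟨i0⟩ := Fin.pos_iff_nonempty.mp hn
  have hsing : majI A P {i0} = P i0 := by
    ext ψ
    simp only [majI, NaccI, Finset.mem_filter, Finset.filter_singleton]
    constructor
    · rintro ⟨hA, hlt⟩
      by_contra h
      simp [h] at hlt
    · intro h
      refine ⟨(hP i0).1 h, ?_⟩
      simp [h]
  have hconsing : Cons (majI A P {i0}) := by rw [hsing]; exact (hP i0).2.2
  have hIpos : 0 < I.card := lt_of_lt_of_le (by simp) (hmax {i0} hconsing)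
  have hNacc : NaccI P I φ = I.card := by
    unfold NaccI
    rw [Finset.filter_true_of_mem fun i _ => huna i]
  have : φ ∈ majI A P I := by
    simp only [majI, Finset.mem_filter, hNacc]
    exact ⟨hφ, by omega⟩
  exact hSJ this
end

section
/- The ranked agenda rule RA satisfies strong unanimity: if every voter in P accepts φ, then every judgment set in RA(P) contains φ. -/
open scoped NNReal

variable {Φ : Type*} [DecidableEq Φ]

theorem greedy_subset (Cons : Finset Φ → Prop) :
    ∀ (l : List Φ) (S : Finset Φ), S ⊆ greedy Cons l S := by
  intro l
  induction l with
  | nil => intro S; simp [greedy]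
  | cons ψ l ih =>
      intro S
      rw [greedy]
      split
      · exact (Finset.subset_insert ψ S).trans (ih _)
      · exact ih _

/-- the ranked-agenda rule satisfies strong unanimity: if every voter in `P`
accepts `φ`, then every judgment set in `RA(P)` contains `φ`. -/
theorem ra_strong_unanimity
    (A : Finset Φ) (neg : Φ → Φ) (Cons : Finset Φ → Prop)
    (hmono : ∀ S T : Finset Φ, S ⊆ T → Cons T → Cons S)
    {n : ℕ} (hn : 0 < n) (P : Fin n → Finset Φ) (hP : ∀ i, Rational A neg Cons (P i))
    (φ : Φ) (hφ : φ ∈ A) (huna : ∀ i, φ ∈ P i) :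
    ∀ J ∈ RA A Cons P, φ ∈ J := by
  rintro J ⟨l, -, hlA, hsort, rfl⟩
  set i₀ : Fin n := ⟨0, hn⟩
  have hNφ : Nacc P φ = n := by
    unfold Nacc
    rw [Finset.filter_true_of_mem (fun i _ => huna i)]
    simp
  have key : ∀ (l : List Φ) (S : Finset Φ),
      l.Pairwise (fun a b => Nacc P b ≤ Nacc P a) → φ ∈ l → S ⊆ P i₀ →
      φ ∈ greedy Cons l S := by
    intro l
    induction l with
    | nil => intro S _ h; simp at h
    | cons ψ l ih =>
        intro S hsort hmem hS
        have hcons := (hP i₀).2.2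
        by_cases hψφ : ψ = φ
        · subst hψφ
          have hins : insert ψ S ⊆ P i₀ := Finset.insert_subset (huna i₀) hS
          rw [greedy, if_pos (hmono _ _ hins hcons)]
          exact greedy_subset Cons l _ (Finset.mem_insert_self _ _)
        · have hφl : φ ∈ l := by
            rcases List.mem_cons.mp hmem with h | h
            · exact absurd h.symm hψφ
            · exact h
          have hNψ : Nacc P ψ = n := by
            have h1 : Nacc P φ ≤ Nacc P ψ := (List.pairwise_cons.mp hsort).1 φ hφl
            have h2 : Nacc P ψ ≤ n := by
              have := Finset.card_filter_le (Finset.univ : Finset (Fin n))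
                (fun i => ψ ∈ P i)
              simpa [Nacc] using this
            omega
          have hψP : ψ ∈ P i₀ := by
            have : (Finset.univ.filter fun i => ψ ∈ P i) = Finset.univ := by
              apply Finset.eq_of_subset_of_card_le (Finset.filter_subset _ _)
              simp [← hNψ, Nacc]
            have := this ▸ (Finset.mem_univ i₀)
            simpa using (Finset.mem_filter.mp this).2
          have hins : insert ψ S ⊆ P i₀ := Finset.insert_subset hψP hS
          rw [greedy, if_pos (hmono _ _ hins hcons)]
          exact ih _ (List.pairwise_cons.mp hsort).2 hφl hins
  exact key l ∅ hsort ((hlA φ).mpr hφ) (Finset.empty_subset _)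
end

section
/- Abstract monotonicity lemma: Let F be a rule such that F(P) is the set of judgment sets undominated under a family of partial orders ≻_P on rational judgment sets. Suppose for every profile P, every φ-improvement P' of P, and all rational J, J': (a) if J and J' agree on φ-membership then J ≻_P J' implies J ≻_{P'} J'; (b) if φ ∈ J and ¬φ ∈ J' then J ≻_P J' implies J ≻_{P'} J'. Then F is monotonic: if every set in F(P) contains φ, then every set in F(P') contains φ. -/
open scoped NNReal

variable {Φ : Type*} [DecidableEq Φ]

/-- `P'` is a `φ`-improvement of `P`: one voter switches from `¬φ` to `φ`, all else equal. -/
def Improvement (neg : Φ → Φ) (φ : Φ) {n : ℕ} (P P' : Fin n → Finset Φ) : Prop :=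
  ∃ i : Fin n, (∀ j, j ≠ i → P' j = P j) ∧ neg φ ∈ P i ∧ φ ∈ P' i ∧
    ∀ ψ, ψ ≠ φ → ψ ≠ neg φ → (ψ ∈ P i ↔ ψ ∈ P' i)

/-- On a finite set, any irreflexive transitive relation has an undominated element. -/
lemma exists_undominated {β : Type*} (r : β → β → Prop) :
    ∀ s : Finset β, (∀ a ∈ s, ¬ r a a) →
      (∀ a ∈ s, ∀ b ∈ s, ∀ c ∈ s, r a b → r b c → r a c) →
      s.Nonempty → ∃ a ∈ s, ∀ b ∈ s, ¬ r b a := by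
  classical
  intro s
  induction s using Finset.strongInduction with
  | _ s ih =>
    intro hi ht ⟨a, ha⟩
    by_cases h : ∀ b ∈ s, ¬ r b a
    · exact ⟨a, ha, h⟩
    · push_neg at h
      set s' := s.filter (fun x => r x a) with hs'
      have hss : s' ⊂ s := by
        refine ⟨Finset.filter_subset _ _, fun hsub => ?_⟩
        have : a ∈ s' := hsub ha
        exact hi a ha (Finset.mem_filter.mp this).2
      obtain ⟨b, hb, hba⟩ := h
      have hne' : s'.Nonempty := ⟨b, Finset.mem_filter.mpr ⟨hb, hba⟩⟩
      obtain ⟨m, hm, hmax⟩ := ih s' hss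
        (fun x hx => hi x (Finset.filter_subset _ _ hx))
        (fun x hx y hy z hz => ht x (Finset.filter_subset _ _ hx) y
          (Finset.filter_subset _ _ hy) z (Finset.filter_subset _ _ hz)) hne'
      have hms : m ∈ s := Finset.filter_subset _ _ hm
      refine ⟨m, hms, fun c hc hcm => ?_⟩
      have hca : r c a := ht c hc m hms a ha hcm (Finset.mem_filter.mp hm).2
      exact hmax c (Finset.mem_filter.mpr ⟨hc, hca⟩) hcm

/-- abstract monotonicity lemma: let `F` map each profile `P` to the set of
rational judgment sets undominated under a strict partial order `≻_P`. If, for every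
`φ`-improvement `P'` of `P`, (a) domination among judgment sets agreeing on `φ` is
preserved, and (b) domination of a `¬φ`-set by a `φ`-set is preserved, then `F` is
monotonic: if every set in `F(P)` contains `φ`, so does every set in `F(P')`. -/
theorem abstract_monotonicity
    (A : Finset Φ) (neg : Φ → Φ) (Cons : Finset Φ → Prop)
    (φ : Φ) (hφ : φ ∈ A) {n : ℕ}
    (succ : (Fin n → Finset Φ) → Finset Φ → Finset Φ → Prop)
    (hirr : ∀ P J, Rational A neg Cons J → ¬ succ P J J)
    (htrans : ∀ P J K L, Rational A neg Cons J → Rational A neg Cons K →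
      Rational A neg Cons L → succ P J K → succ P K L → succ P J L)
    (ha : ∀ P P', Improvement neg φ P P' → ∀ J J', Rational A neg Cons J →
      Rational A neg Cons J' → (φ ∈ J ↔ φ ∈ J') → succ P J J' → succ P' J J')
    (hb : ∀ P P', Improvement neg φ P P' → ∀ J J', Rational A neg Cons J →
      Rational A neg Cons J' → φ ∈ J → neg φ ∈ J' → succ P J J' → succ P' J J')
    (P P' : Fin n → Finset Φ)
    (hP : ∀ i, Rational A neg Cons (P i)) (hP' : ∀ i, Rational A neg Cons (P' i))
    (himp : Improvement neg φ P P')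
    (hall : ∀ J, Rational A neg Cons J → (∀ J', Rational A neg Cons J' → ¬ succ P J' J) →
      φ ∈ J) :
    ∀ J, Rational A neg Cons J → (∀ J', Rational A neg Cons J' → ¬ succ P' J' J) →
      φ ∈ J := by
  classical
  intro J hJ hund
  by_contra hφJ
  have hnegJ : neg φ ∈ J := (hJ.2.1 φ hφ).resolve_left hφJ
  -- J must be dominated in P
  have hdom : ∃ K, Rational A neg Cons K ∧ succ P K J := by
    by_contra h
    push_neg at h
    exact hφJ (hall J hJ fun J' hJ' => h J' hJ')
  obtain ⟨J₀, hJ₀, hJ₀J⟩ := hdom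
  -- the finite set of rational dominators of J in P
  set s : Finset (Finset Φ) :=
    A.powerset.filter (fun K => Rational A neg Cons K ∧ succ P K J) with hs
  have hmem : ∀ K ∈ s, Rational A neg Cons K ∧ succ P K J := by
    intro K hK; exact (Finset.mem_filter.mp hK).2
  have hne : s.Nonempty :=
    ⟨J₀, Finset.mem_filter.mpr ⟨Finset.mem_powerset.mpr hJ₀.1, hJ₀, hJ₀J⟩⟩
  obtain ⟨K, hKs, hKmax⟩ := exists_undominated (succ P) s
    (fun a ha => hirr P a (hmem a ha).1)
    (fun a ha b hb c hc => htrans P a b c (hmem a ha).1 (hmem b hb).1 (hmem c hc).1)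
    hne
  obtain ⟨hKrat, hKJ⟩ := hmem K hKs
  -- K is undominated among all rational sets in P
  have hKund : ∀ L, Rational A neg Cons L → ¬ succ P L K := by
    intro L hL hLK
    have hLJ : succ P L J := htrans P L K J hL hKrat hJ hLK hKJ
    exact hKmax L (Finset.mem_filter.mpr ⟨Finset.mem_powerset.mpr hL.1, hL, hLJ⟩) hLK
  have hφK : φ ∈ K := hall K hKrat hKund
  exact hund K hKrat (hb P P' himp K J hKrat hJ hφK hnegJ hKJ)
end

section
/- MC is monotonic: if every judgment set in MC(P) contains φ and P' is a φ-improvement of P, then every judgment set in MC(P') contains φ. -/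
open scoped NNReal

variable {Φ : Type*} [DecidableEq Φ]

/-- MC is monotonic: if every judgment set in `MC(P)` contains `φ` and `P'`
is a `φ`-improvement of `P`, then every judgment set in `MC(P')` contains `φ`. -/
theorem mc_monotonic
    (A : Finset Φ) (neg : Φ → Φ) (Cons : Finset Φ → Prop)
    (hA_neg : ∀ φ ∈ A, neg φ ∈ A)
    (hneg_ne : ∀ φ ∈ A, neg φ ≠ φ)
    (hneg_neg : ∀ φ ∈ A, neg (neg φ) = φ)
    (hnotboth : ∀ S : Finset Φ, Cons S → ∀ φ ∈ A, φ ∈ S → neg φ ∉ S)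
    (hmono : ∀ S T : Finset Φ, S ⊆ T → Cons T → Cons S)
    (hext : ∀ S : Finset Φ, S ⊆ A → Cons S → ∃ J, Rational A neg Cons J ∧ S ⊆ J)
    {n : ℕ} (P P' : Fin n → Finset Φ)
    (hP : ∀ i, Rational A neg Cons (P i)) (hP' : ∀ i, Rational A neg Cons (P' i))
    (φ : Φ) (hφ : φ ∈ A) (himp : Improvement neg φ P P')
    (hall : ∀ J ∈ MC A neg Cons P, φ ∈ J) :
    ∀ J ∈ MC A neg Cons P', φ ∈ J := by

  obtain ⟨i, hji, hnegPi, hφP'i, hiff⟩ := himp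
  have hnegA : neg φ ∈ A := hA_neg φ hφ
  have hφPi : φ ∉ P i := by
    have h := hnotboth (P i) (hP i).2.2 (neg φ) hnegA hnegPi
    rwa [hneg_neg φ hφ] at h
  have hnegP'i : neg φ ∉ P' i := hnotboth (P' i) (hP' i).2.2 φ hφ hφP'i
  have h1 : Nacc P φ ≤ Nacc P' φ := by
    apply Finset.card_le_card
    intro j hj
    simp only [Finset.mem_filter, Finset.mem_univ, true_and] at hj ⊢
    rcases eq_or_ne j i with rfl | hne
    · exact absurd hj hφPi
    · rw [hji j hne]; exact hj
  have h2 : Nacc P' (neg φ) ≤ Nacc P (neg φ) := by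
    apply Finset.card_le_card
    intro j hj
    simp only [Finset.mem_filter, Finset.mem_univ, true_and] at hj ⊢
    rcases eq_or_ne j i with rfl | hne
    · exact absurd hj hnegP'i
    · rw [← hji j hne]; exact hj
  have h3 : ∀ ψ, ψ ≠ φ → ψ ≠ neg φ → Nacc P ψ = Nacc P' ψ := by
    intro ψ hψ1 hψ2
    unfold Nacc
    congr 1
    apply Finset.filter_congr
    intro j _
    rcases eq_or_ne j i with rfl | hne
    · simpa using hiff ψ hψ1 hψ2
    · rw [hji j hne]
  have hmajA : maj A P ⊆ A := Finset.filter_subset _ _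
  have hmem_maj : ∀ (Q : Fin n → Finset Φ) (ψ : Φ),
      ψ ∈ maj A Q ↔ ψ ∈ A ∧ n < 2 * Nacc Q ψ := by
    intro Q ψ; simp [maj]
  intro J' hJ'
  by_cases hc : neg φ ∈ maj A P
  · -- a maximal consistent subset of maj A P containing ¬φ yields a
    -- judgment set in MC P containing ¬φ, contradicting hall
    exfalso
    have hconsS1 : Cons {neg φ} :=
      hmono {neg φ} (P i) (Finset.singleton_subset_iff.mpr hnegPi) (hP i).2.2
    set s : Set (Finset Φ) := {T | T ⊆ maj A P ∧ neg φ ∈ T ∧ Cons T} with hs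
    have hfin : s.Finite := by
      apply Set.Finite.subset (Finset.finite_toSet (maj A P).powerset)
      intro T hT
      simpa [Finset.mem_powerset] using hT.1
    have hne : s.Nonempty :=
      ⟨{neg φ}, Finset.singleton_subset_iff.mpr hc, Finset.mem_singleton_self _, hconsS1⟩
    obtain ⟨S, hSmem, hSmax⟩ := Set.Finite.exists_maximalFor id s hfin hne
    obtain ⟨hSsub, hnegS, hScons⟩ := hSmem
    obtain ⟨J, hJrat, hSJ⟩ := hext S (hSsub.trans hmajA) hScons
    have hJMC : J ∈ MC A neg Cons P :=
      ⟨hJrat, S, hSsub, hScons,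
        fun T hST hTsub hTcons => le_antisymm (hSmax ⟨hTsub, hST hnegS, hTcons⟩ hST) hST, hSJ⟩
    exact hnotboth J hJrat.2.2 φ hφ (hall J hJMC) (hSJ hnegS)
  · by_contra hφJ'
    obtain ⟨hJ'rat, S', hS'maj, hS'cons, hS'max, hS'J'⟩ := hJ'
    have hφS' : φ ∉ S' := fun h => hφJ' (hS'J' h)
    have hnegmaj' : neg φ ∉ maj A P' := by
      intro h
      apply hc
      rw [hmem_maj] at h ⊢
      exact ⟨h.1, lt_of_lt_of_le h.2 (by omega)⟩
    have hS'P : S' ⊆ maj A P := by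
      intro ψ hψ
      have hψ' := hS'maj hψ
      have hψφ : ψ ≠ φ := fun h => hφS' (h ▸ hψ)
      have hψnφ : ψ ≠ neg φ := fun h => hnegmaj' (h ▸ hψ')
      rw [hmem_maj] at hψ' ⊢
      exact ⟨hψ'.1, by rw [h3 ψ hψφ hψnφ]; exact hψ'.2⟩
    have hS'maxP : ∀ T, S' ⊆ T → T ⊆ maj A P → Cons T → T = S' := by
      intro T hST hTP hTcons
      apply hS'max T hST _ hTcons
      intro ψ hψ
      have hψP := hTP hψ
      rcases eq_or_ne ψ φ with rfl | hψφ
      · rw [hmem_maj] at hψP ⊢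
        exact ⟨hψP.1, lt_of_lt_of_le hψP.2 (by omega)⟩
      · have hψnφ : ψ ≠ neg φ := fun h => hc (h ▸ hψP)
        rw [hmem_maj] at hψP ⊢
        exact ⟨hψP.1, by rw [← h3 ψ hψφ hψnφ]; exact hψP.2⟩
    exact hφJ' (hall J' ⟨hJ'rat, S', hS'P, hS'cons, hS'maxP, hS'J'⟩)
end

section
/- For any distance d on rational judgment sets satisfying agreement monotonicity, both the sum-aggregation rule F^{d,Σ} and the max-aggregation rule F^{d,max} are monotonic. -/
open scoped NNReal

variable {Φ : Type*} [DecidableEq Φ]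

/-- The sum-distance rule `F^{d,Σ}`. -/
def Fsum (A : Finset Φ) (neg : Φ → Φ) (Cons : Finset Φ → Prop)
    (d : Finset Φ → Finset Φ → ℝ≥0) {n : ℕ} (P : Fin n → Finset Φ) : Set (Finset Φ) :=
  {J | Rational A neg Cons J ∧ ∀ J', Rational A neg Cons J' →
      ∑ i, d J (P i) ≤ ∑ i, d J' (P i)}

/-- for any distance `d` on rational judgment sets satisfying agreement
monotonicity, both `F^{d,Σ}` and `F^{d,max}` are monotonic. -/
theorem agreement_monotonic_distance_rules_monotonic
    (A : Finset Φ) (neg : Φ → Φ) (Cons : Finset Φ → Prop)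
    (hA_neg : ∀ φ ∈ A, neg φ ∈ A)
    (hnotboth : ∀ S : Finset Φ, Cons S → ∀ φ ∈ A, φ ∈ S → neg φ ∉ S)
    (φ : Φ) (hφ : φ ∈ A)
    (d : Finset Φ → Finset Φ → ℝ≥0)
    (hsymm : ∀ J J', Rational A neg Cons J → Rational A neg Cons J' → d J J' = d J' J)
    (hzero : ∀ J J', Rational A neg Cons J → Rational A neg Cons J' → (d J J' = 0 ↔ J = J'))
    (hagree : ∀ J J' J'', Rational A neg Cons J → Rational A neg Cons J' →
      Rational A neg Cons J'' → (J'' \ J') ⊂ (J'' \ J) → d J' J'' ≤ d J J'') :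
    (∀ {n : ℕ} (P P' : Fin n → Finset Φ), (∀ i, Rational A neg Cons (P i)) →
      (∀ i, Rational A neg Cons (P' i)) → Improvement neg φ P P' →
      (∀ J ∈ Fsum A neg Cons d P, φ ∈ J) → ∀ J ∈ Fsum A neg Cons d P', φ ∈ J) ∧
    (∀ {n : ℕ} (P P' : Fin n → Finset Φ), (∀ i, Rational A neg Cons (P i)) →
      (∀ i, Rational A neg Cons (P' i)) → Improvement neg φ P P' →
      (∀ J ∈ Fmax A neg Cons d P, φ ∈ J) → ∀ J ∈ Fmax A neg Cons d P', φ ∈ J) := by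
  classical
  -- Key lemma 1: if `φ ∈ J`, moving a voter from `K` (with `¬φ`) to `K'` (with `φ`)
  -- does not increase the distance to `J`.
  have key1 : ∀ K K' J : Finset Φ, Rational A neg Cons K → Rational A neg Cons K' →
      Rational A neg Cons J → neg φ ∈ K → φ ∈ K' →
      (∀ ψ, ψ ≠ φ → ψ ≠ neg φ → (ψ ∈ K ↔ ψ ∈ K')) → φ ∈ J → d J K' ≤ d J K := by
    intro K K' J hK hK' hJ hnegK hφK' heqv hφJ
    have hφnK : φ ∉ K := fun h => hnotboth K hK.2.2 φ hφ h hnegK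
    have hnegnK' : neg φ ∉ K' := hnotboth K' hK'.2.2 φ hφ hφK'
    have hnegnJ : neg φ ∉ J := hnotboth J hJ.2.2 φ hφ hφJ
    rw [hsymm J K' hJ hK', hsymm J K hJ hK]
    refine hagree K K' J hK hK' hJ ?_
    have hsub : J \ K' ⊆ J \ K := by
      intro ψ hψ
      simp only [Finset.mem_sdiff] at hψ ⊢
      refine ⟨hψ.1, ?_⟩
      by_cases h1 : ψ = φ
      · exact absurd (h1 ▸ hφK') hψ.2
      by_cases h2 : ψ = neg φ
      · exact absurd (h2 ▸ hψ.1) hnegnJ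
      · exact fun h => hψ.2 ((heqv ψ h1 h2).mp h)
    refine (Finset.ssubset_iff_of_subset hsub).mpr ⟨φ, ?_, ?_⟩
    · exact Finset.mem_sdiff.mpr ⟨hφJ, hφnK⟩
    · exact fun h => (Finset.mem_sdiff.mp h).2 hφK'
  -- Key lemma 2: if `¬φ ∈ J`, the distance to `J` does not decrease.
  have key2 : ∀ K K' J : Finset Φ, Rational A neg Cons K → Rational A neg Cons K' →
      Rational A neg Cons J → neg φ ∈ K → φ ∈ K' →
      (∀ ψ, ψ ≠ φ → ψ ≠ neg φ → (ψ ∈ K ↔ ψ ∈ K')) → neg φ ∈ J → d J K ≤ d J K' := by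
    intro K K' J hK hK' hJ hnegK hφK' heqv hnegJ
    have hφnK : φ ∉ K := fun h => hnotboth K hK.2.2 φ hφ h hnegK
    have hnegnK' : neg φ ∉ K' := hnotboth K' hK'.2.2 φ hφ hφK'
    have hφnJ : φ ∉ J := fun h => hnotboth J hJ.2.2 φ hφ h hnegJ
    rw [hsymm J K' hJ hK', hsymm J K hJ hK]
    refine hagree K' K J hK' hK hJ ?_
    have hsub : J \ K ⊆ J \ K' := by
      intro ψ hψ
      simp only [Finset.mem_sdiff] at hψ ⊢
      refine ⟨hψ.1, ?_⟩
      by_cases h1 : ψ = φ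
      · exact absurd (h1 ▸ hψ.1) hφnJ
      by_cases h2 : ψ = neg φ
      · exact h2 ▸ hnegnK'
      · exact fun h => hψ.2 ((heqv ψ h1 h2).mpr h)
    refine (Finset.ssubset_iff_of_subset hsub).mpr ⟨neg φ, ?_, ?_⟩
    · exact Finset.mem_sdiff.mpr ⟨hnegJ, hnegnK'⟩
    · exact fun h => (Finset.mem_sdiff.mp h).2 hnegK
  constructor
  · -- Fsum
    intro n P P' hP hP' hImp hmono J' hJ'
    obtain ⟨i, hoth, hnegPi, hφP'i, heqv⟩ := hImp
    obtain ⟨hJ'rat, hJ'opt⟩ := hJ'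
    by_contra hφnJ'
    have hnegJ' : neg φ ∈ J' := (hJ'rat.2.1 φ hφ).resolve_left hφnJ'
    -- find a minimizer for P
    set T : Finset (Finset Φ) := A.powerset.filter (fun S => Rational A neg Cons S) with hT
    have hmemT : ∀ S, S ∈ T ↔ Rational A neg Cons S := by
      intro S
      simp only [hT, Finset.mem_filter, Finset.mem_powerset]
      exact ⟨fun h => h.2, fun h => ⟨h.1, h⟩⟩
    obtain ⟨J, hJT, hJmin⟩ := Finset.exists_min_image T (fun S => ∑ j, d S (P j))
      ⟨J', (hmemT J').mpr hJ'rat⟩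
    have hJrat : Rational A neg Cons J := (hmemT J).mp hJT
    have hJF : J ∈ Fsum A neg Cons d P :=
      ⟨hJrat, fun S hS => hJmin S ((hmemT S).mpr hS)⟩
    have hφJ : φ ∈ J := hmono J hJF
    -- chain of inequalities
    have h1 : ∑ j, d J' (P j) ≤ ∑ j, d J' (P' j) := by
      refine Finset.sum_le_sum fun j _ => ?_
      by_cases hj : j = i
      · subst hj; exact key2 (P j) (P' j) J' (hP j) (hP' j) hJ'rat hnegPi hφP'i heqv hnegJ'
      · rw [hoth j hj]
    have h2 : ∑ j, d J' (P' j) ≤ ∑ j, d J (P' j) := hJ'opt J hJrat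
    have h3 : ∑ j, d J (P' j) ≤ ∑ j, d J (P j) := by
      refine Finset.sum_le_sum fun j _ => ?_
      by_cases hj : j = i
      · subst hj; exact key1 (P j) (P' j) J (hP j) (hP' j) hJrat hnegPi hφP'i heqv hφJ
      · rw [hoth j hj]
    have hJ'F : J' ∈ Fsum A neg Cons d P := by
      refine ⟨hJ'rat, fun S hS => ?_⟩
      exact le_trans (le_trans h1 (le_trans h2 h3)) (hJmin S ((hmemT S).mpr hS))
    exact hφnJ' (hmono J' hJ'F)
  · -- Fmax
    intro n P P' hP hP' hImp hmono J' hJ'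
    obtain ⟨i, hoth, hnegPi, hφP'i, heqv⟩ := hImp
    obtain ⟨hJ'rat, hJ'opt⟩ := hJ'
    by_contra hφnJ'
    have hnegJ' : neg φ ∈ J' := (hJ'rat.2.1 φ hφ).resolve_left hφnJ'
    set T : Finset (Finset Φ) := A.powerset.filter (fun S => Rational A neg Cons S) with hT
    have hmemT : ∀ S, S ∈ T ↔ Rational A neg Cons S := by
      intro S
      simp only [hT, Finset.mem_filter, Finset.mem_powerset]
      exact ⟨fun h => h.2, fun h => ⟨h.1, h⟩⟩
    obtain ⟨J, hJT, hJmin⟩ := Finset.exists_min_image T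
      (fun S => Finset.univ.sup fun j => d S (P j)) ⟨J', (hmemT J').mpr hJ'rat⟩
    have hJrat : Rational A neg Cons J := (hmemT J).mp hJT
    have hJF : J ∈ Fmax A neg Cons d P :=
      ⟨hJrat, fun S hS => hJmin S ((hmemT S).mpr hS)⟩
    have hφJ : φ ∈ J := hmono J hJF
    have h1 : (Finset.univ.sup fun j => d J' (P j)) ≤ Finset.univ.sup fun j => d J' (P' j) := by
      refine Finset.sup_mono_fun fun j _ => ?_
      by_cases hj : j = i
      · subst hj; exact key2 (P j) (P' j) J' (hP j) (hP' j) hJ'rat hnegPi hφP'i heqv hnegJ'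
      · rw [hoth j hj]
    have h2 : (Finset.univ.sup fun j => d J' (P' j)) ≤ Finset.univ.sup fun j => d J (P' j) :=
      hJ'opt J hJrat
    have h3 : (Finset.univ.sup fun j => d J (P' j)) ≤ Finset.univ.sup fun j => d J (P j) := by
      refine Finset.sup_mono_fun fun j _ => ?_
      by_cases hj : j = i
      · subst hj; exact key1 (P j) (P' j) J (hP j) (hP' j) hJrat hnegPi hφP'i heqv hφJ
      · rw [hoth j hj]
    have hJ'F : J' ∈ Fmax A neg Cons d P := by
      refine ⟨hJ'rat, fun S hS => ?_⟩
      exact le_trans (le_trans h1 (le_trans h2 h3)) (hJmin S ((hmemT S).mpr hS))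
    exact hφnJ' (hmono J' hJ'F)
end

section
/- Max-distance rules satisfy weak reinforcement: if F(P) = argmin_J max_{J_i∈P} d(J,J_i) and F(P) ∩ F(Q) ≠ ∅, then F(P+Q) ∩ (F(P) ∩ F(Q)) ≠ ∅. -/
open scoped NNReal

variable {Φ : Type*} [DecidableEq Φ]

lemma sup_fin_add {n q : ℕ} (g : Fin (n + q) → ℝ≥0) :
    Finset.univ.sup g =
      (Finset.univ.sup fun i : Fin n => g (Fin.castAdd q i)) ⊔
      (Finset.univ.sup fun j : Fin q => g (Fin.natAdd n j)) := by
  apply le_antisymm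
  · apply Finset.sup_le
    intro i _
    refine Fin.addCases (fun i => ?_) (fun j => ?_) i
    · exact le_sup_of_le_left (Finset.le_sup (f := fun i => g (Fin.castAdd q i)) (Finset.mem_univ i))
    · exact le_sup_of_le_right (Finset.le_sup (f := fun j => g (Fin.natAdd n j)) (Finset.mem_univ j))
  · refine sup_le ?_ ?_ <;> apply Finset.sup_le <;>
      exact fun i _ => Finset.le_sup (Finset.mem_univ _)

/-- max-distance rules satisfy weak reinforcement: if
`F(P) ∩ F(Q) ≠ ∅` then `F(P+Q) ∩ (F(P) ∩ F(Q)) ≠ ∅`. -/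
theorem max_distance_rule_weak_reinforcement
    (A : Finset Φ) (neg : Φ → Φ) (Cons : Finset Φ → Prop)
    (d : Finset Φ → Finset Φ → ℝ≥0)
    (hsymm : ∀ J J', Rational A neg Cons J → Rational A neg Cons J' → d J J' = d J' J)
    (hzero : ∀ J J', Rational A neg Cons J → Rational A neg Cons J' → (d J J' = 0 ↔ J = J'))
    {n q : ℕ} (hn : 0 < n) (hq : 0 < q)
    (P : Fin n → Finset Φ) (Q : Fin q → Finset Φ)
    (hne : (Fmax A neg Cons d P ∩ Fmax A neg Cons d Q).Nonempty) :
    (Fmax A neg Cons d (Fin.append P Q) ∩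
      (Fmax A neg Cons d P ∩ Fmax A neg Cons d Q)).Nonempty := by
  obtain ⟨J, ⟨hJP, hJQ⟩⟩ := hne
  refine ⟨J, ⟨?_, hJP, hJQ⟩⟩
  refine ⟨hJP.1, fun J' hJ' => ?_⟩
  have hP := hJP.2 J' hJ'
  have hQ := hJQ.2 J' hJ'
  have key : ∀ K : Finset Φ,
      (Finset.univ.sup fun i => d K (Fin.append P Q i)) =
        (Finset.univ.sup fun i => d K (P i)) ⊔ (Finset.univ.sup fun i => d K (Q i)) := by
    intro K
    rw [sup_fin_add (fun i => d K (Fin.append P Q i))]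
    simp [Fin.append_left, Fin.append_right]
  rw [key J, key J']
  exact sup_le_sup hP hQ
end
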